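/- Let û₂ > k satisfy: for all x ≥ û₂, (c − b·k)/(1 − a) < x + ln((x − k)/x²). Then every trajectory of the Chialvo map starting in the region Ĉ₂ = {(x,y) : x > û₂, y ≤ v̂} leaves Ĉ₂ after a finite number of iterations: for every (x,y) ∈ Ĉ₂ there exists n ≥ 1 such that fⁿ(x,y) ∉ Ĉ₂. -/
import Mathlib


/-- Every trajectory starting in region `Ĉ₂ = {x > û₂, y ≤ v̂}` leaves `Ĉ₂`
after a finite number of iterations. -/
theorem chialvo_escape_C2
    (a b c k : ℝ)
    (ha : a ∈ Set.Ioo (0:ℝ) 1) (hb : b ∈ Set.Ioo (0:ℝ) 1)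
    (hc : c ∈ Set.Ioo (0:ℝ) 1) (hk : 0 < k)
    (f : ℝ × ℝ → ℝ × ℝ)
    (hf : ∀ p : ℝ × ℝ,
      f p = (p.1 ^ 2 * Real.exp (p.2 - p.1) + k, a * p.2 - b * p.1 + c))
    (v : ℝ) (hv : v = (c - b * k) / (1 - a))
    (u2 : ℝ) (hu2k : u2 > k)
    (hu2 : ∀ x ≥ u2, (c - b * k) / (1 - a) < x + Real.log ((x - k) / x ^ 2))
    (C2 : Set (ℝ × ℝ)) (hC2 : C2 = {p : ℝ × ℝ | p.1 > u2 ∧ p.2 ≤ v}) :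
    ∀ p ∈ C2, ∃ n : ℕ, n ≥ 1 ∧ f^[n] p ∉ C2 := by
  intro p hp
  by_contra hcon
  push_neg at hcon
  have hmem : ∀ n : ℕ, f^[n] p ∈ C2 := by
    intro n
    cases n with
    | zero => simpa using hp
    | succ m => exact hcon (m+1) (Nat.succ_le_succ (Nat.zero_le m))
  set x : ℕ → ℝ := fun n => (f^[n] p).1 with hxdef
  set y : ℕ → ℝ := fun n => (f^[n] p).2 with hydef
  have hx : ∀ n, u2 < x n := by
    intro n; have := hmem n; rw [hC2] at this; exact this.1
  have hy : ∀ n, y n ≤ v := by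
    intro n; have := hmem n; rw [hC2] at this; exact this.2
  have hrec : ∀ n, f^[n+1] p = f (f^[n] p) := by
    intro n; rw [Function.iterate_succ_apply']
  have hxrec : ∀ n, x (n+1) = (x n) ^ 2 * Real.exp (y n - x n) + k := by
    intro n
    show (f^[n+1] p).1 = _
    rw [hrec n, hf]
  have hyrec : ∀ n, y (n+1) = a * y n - b * x n + c := by
    intro n
    show (f^[n+1] p).2 = _
    rw [hrec n, hf]
  have ha1 : a < 1 := ha.2
  have ha0 : 0 < a := ha.1
  have hb0 : 0 < b := hb.1
  have hane : (1 : ℝ) - a ≠ 0 := by linarith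
  have hvfix : a * v - b * k + c = v := by
    rw [hv]; field_simp; ring
  -- From step 1 on, y n ≤ v - b*(u2 - k)
  have hy' : ∀ n, y (n+1) ≤ v - b * (u2 - k) := by
    intro n
    have h1 : a * y n ≤ a * v := by
      have := hy n; nlinarith
    have h2 : b * u2 ≤ b * x n := by
      have := hx n; nlinarith
    have := hyrec n
    nlinarith
  set r : ℝ := Real.exp (-(b * (u2 - k))) with hrdef
  have hr0 : 0 < r := Real.exp_pos _
  have hr1 : r < 1 := by
    rw [hrdef]
    apply Real.exp_lt_one_iff.2
    nlinarith
  -- key contraction step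
  have key : ∀ n, 1 ≤ n → x (n+1) - k < (x n - k) * r := by
    intro n hn
    have hxk : k < x n := lt_trans hu2k (hx n)
    have hxpos : 0 < x n := lt_trans hk hxk
    have hq : 0 < (x n - k) / (x n) ^ 2 := div_pos (by linarith) (by positivity)
    have hh := hu2 (x n) (le_of_lt (hx n))
    rw [← hv] at hh
    have hexp : Real.exp (v - x n) < (x n - k) / (x n) ^ 2 := by
      have : v - x n < Real.log ((x n - k) / (x n) ^ 2) := by linarith
      calc Real.exp (v - x n) < Real.exp (Real.log ((x n - k) / (x n) ^ 2)) :=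
            Real.exp_lt_exp.2 this
        _ = (x n - k) / (x n) ^ 2 := Real.exp_log hq
    have hsq : 0 < (x n) ^ 2 := by positivity
    have hstep1 : (x n) ^ 2 * Real.exp (v - x n) < x n - k := by
      rw [lt_div_iff₀ hsq] at hexp
      nlinarith [hexp]
    -- y n ≤ v - b*(u2-k) since n ≥ 1
    obtain ⟨m, rfl⟩ : ∃ m, n = m + 1 := ⟨n - 1, (Nat.succ_pred_eq_of_pos hn).symm⟩
    have hyn : y (m+1) ≤ v - b * (u2 - k) := hy' m
    have hsplit : Real.exp (y (m+1) - x (m+1)) ≤ Real.exp (v - x (m+1)) * r := by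
      rw [hrdef, ← Real.exp_add]
      apply Real.exp_le_exp.2
      linarith
    have hxr : x (m+1+1) - k = (x (m+1)) ^ 2 * Real.exp (y (m+1) - x (m+1)) := by
      rw [hxrec (m+1)]; ring
    calc x (m+1+1) - k = (x (m+1)) ^ 2 * Real.exp (y (m+1) - x (m+1)) := hxr
      _ ≤ (x (m+1)) ^ 2 * (Real.exp (v - x (m+1)) * r) := by
          apply mul_le_mul_of_nonneg_left hsplit (le_of_lt hsq)
      _ = ((x (m+1)) ^ 2 * Real.exp (v - x (m+1))) * r := by ring
      _ < (x (m+1) - k) * r := by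
          apply mul_lt_mul_of_pos_right hstep1 hr0
  -- geometric decay from step 1
  have geo : ∀ m : ℕ, x (1 + m) - k ≤ (x 1 - k) * r ^ m := by
    intro m
    induction m with
    | zero => simp
    | succ j ih =>
        have h1 : x (1 + j + 1) - k < (x (1 + j) - k) * r := key (1 + j) (by omega)
        have h2 : (x (1 + j) - k) * r ≤ ((x 1 - k) * r ^ j) * r :=
          mul_le_mul_of_nonneg_right ih (le_of_lt hr0)
        have : x (1 + (j + 1)) - k ≤ (x 1 - k) * r ^ (j + 1) := by
          have heq : 1 + (j + 1) = 1 + j + 1 := by omega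
          rw [heq, pow_succ]
          calc x (1 + j + 1) - k ≤ (x (1 + j) - k) * r := le_of_lt h1
            _ ≤ ((x 1 - k) * r ^ j) * r := h2
            _ = (x 1 - k) * (r ^ j * r) := by ring
        exact this
  have hx1k : 0 < x 1 - k := by
    have := hx 1; linarith
  have hu2kpos : 0 < u2 - k := by linarith
  obtain ⟨m, hm⟩ := exists_pow_lt_of_lt_one (by positivity : (0:ℝ) < (u2 - k) / (x 1 - k)) hr1
  have hcontr : (x 1 - k) * r ^ m < u2 - k := by
    rw [lt_div_iff₀ hx1k] at hm
    nlinarith [hm]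
  have hlow : u2 - k < x (1 + m) - k := by
    have := hx (1 + m); linarith
  have := geo m
  linarith
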